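/- Let P and Q be finite posets without isolated points, with Q an induced subposet of P, and let f : P → Q be a retraction (an idempotent order-preserving surjection onto Q). Then there exists a retraction g : P → Q with g[L(P)] = L(Q), g[U(P)] = U(Q), and g agreeing with f on M(P). -/

import Mathlib

open Set

/-- Minimal points of a poset. -/
def LSet (α : Type*) [PartialOrder α] : Set α := {x | ∀ y, y ≤ x → y = x}

/-- Maximal points of a poset. -/
def USet (α : Type*) [PartialOrder α] : Set α := {x | ∀ y, x ≤ y → y = x}

/-- Extremal points. -/
def ESet (α : Type*) [PartialOrder α] : Set α := LSet α ∪ USet α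

/-- Non-extremal (interior) points. -/
def MSet (α : Type*) [PartialOrder α] : Set α := (ESet α)ᶜ

/-- No isolated points: every point is comparable to some other point. -/
def NoIsolated (α : Type*) [PartialOrder α] : Prop := ∀ x : α, ∃ y : α, x < y ∨ y < x

/-- Height one: every point is extremal and some strict comparability exists. -/
def HeightOne (α : Type*) [PartialOrder α] : Prop :=
  (∀ x : α, x ∈ ESet α) ∧ ∃ x y : α, x < y

/-- A 4-crown with minimal points a, b and maximal points v, w:
the comparabilities are exactly a<v, a<w, b<v, b<w. -/
def IsCrown {α : Type*} [PartialOrder α] (a b v w : α) : Prop :=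
  a < v ∧ a < w ∧ b < v ∧ b < w ∧ ¬ a ≤ b ∧ ¬ b ≤ a ∧ ¬ v ≤ w ∧ ¬ w ≤ v

/-- The inner of a 4-crown: [a,v] ∩ [b,w]. -/
def crownInner {α : Type*} [PartialOrder α] (a b v w : α) : Set α :=
  {m | a ≤ m ∧ m ≤ v} ∩ {m | b ≤ m ∧ m ≤ w}

/-- An improper 4-crown contained in the extremal points E(P). -/
def IsImproperCrownE {α : Type*} [PartialOrder α] (a b v w : α) : Prop :=
  IsCrown a b v w ∧ a ∈ ESet α ∧ b ∈ ESet α ∧ v ∈ ESet α ∧ w ∈ ESet α ∧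
    (crownInner a b v w).Nonempty

/-- Inner points of improper 4-crowns contained in E(P). -/
def innerPts (α : Type*) [PartialOrder α] : Set α :=
  {m | ∃ a b v w : α, IsImproperCrownE a b v w ∧ m ∈ crownInner a b v w}

/-- Ξ(m): union of all improper 4-crowns with inner point m. -/
def Xi {α : Type*} [PartialOrder α] (m : α) : Set α :=
  (LSet α ∩ {x | x ≤ m}) ∪ (USet α ∩ {x | m ≤ x})

/-- 4-crown bundles: maximal sets Ξ(m) with respect to inclusion. -/
def bundles (α : Type*) [PartialOrder α] : Set (Set α) :=
  {F | ∃ m ∈ innerPts α, F = Xi m ∧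
    ∀ m' ∈ innerPts α, Xi m ⊆ Xi m' → Xi m' = Xi m}

/-- R is a retract of the poset on α. -/
def IsRetract (α : Type*) [PartialOrder α] (R : Set α) : Prop :=
  ∃ r : α → α, Monotone r ∧ (∀ x, r (r x) = r x) ∧ Set.range r = R

/-- C is a retract of the induced subposet on Y. -/
def IsRetractIn {α : Type*} [PartialOrder α] (Y C : Set α) : Prop :=
  ∃ r : Y → Y, Monotone r ∧ (∀ x, r (r x) = r x) ∧
    Set.range r = {y : Y | (y : α) ∈ C}

/-- The comparability graph of the poset is connected. -/
def PosetConnected (α : Type*) [PartialOrder α] : Prop :=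
  ∀ x y : α, Relation.ReflTransGen (fun u v => u ≤ v ∨ v ≤ u) x y

/-- Minimal points of an induced subposet. -/
def minIn {α : Type*} [PartialOrder α] (S : Set α) : Set α :=
  {x ∈ S | ∀ y ∈ S, y ≤ x → y = x}

/-- Maximal points of an induced subposet. -/
def maxIn {α : Type*} [PartialOrder α] (S : Set α) : Set α :=
  {x ∈ S | ∀ y ∈ S, x ≤ y → y = x}

theorem stmt1 {α : Type*} [Fintype α] [PartialOrder α]
    (hPiso : NoIsolated α) (Q : Set α)
    (hQiso : ∀ x ∈ Q, ∃ y ∈ Q, x < y ∨ y < x)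
    (f : α → α) (hf : Monotone f) (hidem : ∀ x, f (f x) = f x)
    (hran : Set.range f = Q) :
    ∃ g : α → α, Monotone g ∧ (∀ x, g (g x) = g x) ∧ Set.range g = Q ∧
      g '' LSet α = minIn Q ∧ g '' USet α = maxIn Q ∧
      ∀ x ∈ MSet α, g x = f x := by
  classical
  have hfQ : ∀ x, f x ∈ Q := fun x => hran ▸ Set.mem_range_self x
  have hfix : ∀ q ∈ Q, f q = q := by
    intro q hq
    rw [← hran] at hq
    obtain ⟨y, rfl⟩ := hq
    exact hidem y
  have hminx : ∀ x : α, ∃ q, (q ∈ Q ∧ q ≤ f x) ∧ ∀ q' ∈ Q, q' ≤ q → q' = q := by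
    intro x
    obtain ⟨a, ha, hamin⟩ := Set.Finite.exists_minimalFor id {q ∈ Q | q ≤ f x}
      (Set.toFinite _) ⟨f x, hfQ x, le_refl _⟩
    exact ⟨a, ⟨ha.1, ha.2⟩, fun q' hq' hle => le_antisymm hle (hamin ⟨hq', hle.trans ha.2⟩ hle)⟩
  have hmaxx : ∀ x : α, ∃ q, (q ∈ Q ∧ f x ≤ q) ∧ ∀ q' ∈ Q, q ≤ q' → q' = q := by
    intro x
    obtain ⟨a, ha, hamax⟩ := Set.Finite.exists_maximalFor id {q ∈ Q | f x ≤ q}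
      (Set.toFinite _) ⟨f x, hfQ x, le_refl _⟩
    exact ⟨a, ⟨ha.1, ha.2⟩, fun q' hq' hle => le_antisymm (hamax ⟨hq', ha.2.trans hle⟩ hle) hle⟩
  choose m hm hmmin using hminx
  choose M hM hMmax using hmaxx
  set g : α → α := fun x => if x ∈ LSet α then m x else if x ∈ USet α then M x else f x
    with hgdef
  have gL : ∀ z ∈ LSet α, g z = m z := fun z hz => by simp only [hgdef, if_pos hz]
  have gU : ∀ z, z ∉ LSet α → z ∈ USet α → g z = M z := fun z h1 h2 => by
    simp only [hgdef, if_neg h1, if_pos h2]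
  have gM : ∀ z, z ∉ LSet α → z ∉ USet α → g z = f z := fun z h1 h2 => by
    simp only [hgdef, if_neg h1, if_neg h2]
  have hgQ : ∀ x, g x ∈ Q := by
    intro x
    simp only [hgdef]
    split_ifs with h1 h2
    · exact (hm x).1
    · exact (hM x).1
    · exact hfQ x
  have hfg : ∀ z, z ∉ LSet α → f z ≤ g z := by
    intro z hz
    simp only [hgdef, if_neg hz]
    split_ifs with h2
    · exact (hM z).2
    · exact le_refl _
  have hgfix : ∀ q ∈ Q, g q = q := by
    intro q hq
    by_cases h1 : q ∈ LSet α
    · rw [gL q h1]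
      exact h1 _ ((hm q).2.trans_eq (hfix q hq))
    · by_cases h2 : q ∈ USet α
      · rw [gU q h1 h2]
        exact h2 _ ((hfix q hq).symm.trans_le (hM q).2)
      · rw [gM q h1 h2]; exact hfix q hq
  have hgmono : Monotone g := by
    intro x y hxy
    by_cases hyL : y ∈ LSet α
    · have : x = y := hyL x hxy
      rw [this]
    · have hfyg : f y ≤ g y := hfg y hyL
      by_cases hxL : x ∈ LSet α
      · rw [gL x hxL]
        exact ((hm x).2.trans (hf hxy)).trans hfyg
      · by_cases hxU : x ∈ USet α
        · have : y = x := hxU y hxy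
          rw [this]
        · rw [gM x hxL hxU]
          exact (hf hxy).trans hfyg
  refine ⟨g, hgmono, fun x => hgfix _ (hgQ x), ?_, ?_, ?_, ?_⟩
  · apply Set.Subset.antisymm
    · rintro _ ⟨x, rfl⟩
      exact hgQ x
    · intro q hq
      exact ⟨q, hgfix q hq⟩
  · apply Set.Subset.antisymm
    · rintro _ ⟨x, hx, rfl⟩
      rw [gL x hx]
      exact ⟨(hm x).1, fun y hy hle => hmmin x y hy hle⟩
    · rintro q ⟨hqQ, hqmin⟩
      obtain ⟨a, ha, hamin⟩ := Set.Finite.exists_minimalFor id {x : α | x ≤ q}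
        (Set.toFinite _) ⟨q, le_refl _⟩
      have haL : a ∈ LSet α := fun y hy => le_antisymm hy (hamin (hy.trans ha) hy)
      refine ⟨a, haL, ?_⟩
      rw [gL a haL]
      exact hqmin _ (hm a).1 (((hm a).2.trans (hf ha)).trans_eq (hfix q hqQ))
  · apply Set.Subset.antisymm
    · rintro _ ⟨x, hx, rfl⟩
      have hxL : x ∉ LSet α := by
        intro hxL
        obtain ⟨y, hy | hy⟩ := hPiso x
        · exact absurd (hx y hy.le) hy.ne'
        · exact absurd (hxL y hy.le) hy.ne
      rw [gU x hxL hx]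
      exact ⟨(hM x).1, fun y hy hle => hMmax x y hy hle⟩
    · rintro q ⟨hqQ, hqmax⟩
      obtain ⟨a, ha, hamax⟩ := Set.Finite.exists_maximalFor id {x : α | q ≤ x}
        (Set.toFinite _) ⟨q, le_refl _⟩
      have haU : a ∈ USet α := fun y hy => le_antisymm (hamax (ha.trans hy) hy) hy
      have haL : a ∉ LSet α := by
        intro hxL
        obtain ⟨y, hy | hy⟩ := hPiso a
        · exact absurd (haU y hy.le) hy.ne'
        · exact absurd (hxL y hy.le) hy.ne
      refine ⟨a, haU, ?_⟩
      rw [gU a haL haU]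
      exact hqmax _ (hM a).1 (((hfix q hqQ).symm.trans_le (hf ha)).trans (hM a).2)
  · intro x hx
    simp only [MSet, ESet, Set.mem_compl_iff, Set.mem_union, not_or] at hx
    exact gM x hx.1 hx.2
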